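/- arXiv:2110.00613 — 7 statements merged into one kernel-verified Lean document; each statement's English description precedes it below -/
import Mathlib

section
/- For all natural numbers n ≥ 1 and 1 ≤ k ≤ B, one has k^n · C(B+n−1, n) ≤ B^n · C(k+n−1, n), where C(a,b) denotes the binomial coefficient. Equivalently, the multiset-coefficient ratio C(k+n−1,n)/C(B+n−1,n) is at least the string-coefficient ratio k^n/B^n. -/
lemma asc_key (n k B : ℕ) (hkB : k ≤ B) :
    k ^ n * B.ascFactorial n ≤ B ^ n * k.ascFactorial n := by
  induction n with
  | zero => simp
  | succ n ih =>
    rw [Nat.ascFactorial_succ, Nat.ascFactorial_succ, pow_succ, pow_succ]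
    calc k ^ n * k * ((B + n) * B.ascFactorial n)
        = (k * (B + n)) * (k ^ n * B.ascFactorial n) := by ring
      _ ≤ (B * (k + n)) * (B ^ n * k.ascFactorial n) := by
          apply Nat.mul_le_mul _ ih
          nlinarith
      _ = B ^ n * B * ((k + n) * k.ascFactorial n) := by ring

/-- For all natural numbers `n ≥ 1` and `1 ≤ k ≤ B`,
`k^n * C(B+n-1, n) ≤ B^n * C(k+n-1, n)`: the multiset-coefficient ratio
`C(k+n-1,n)/C(B+n-1,n)` is at least the string-coefficient ratio `k^n/B^n`. -/
theorem multiset_ratio_ge_string_ratio (n k B : ℕ) (hn : 1 ≤ n) (hk : 1 ≤ k) (hkB : k ≤ B) :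
    k ^ n * (B + n - 1).choose n ≤ B ^ n * (k + n - 1).choose n := by
  have h := asc_key n k B hkB
  rw [Nat.ascFactorial_eq_factorial_mul_choose', Nat.ascFactorial_eq_factorial_mul_choose'] at h
  apply Nat.le_of_mul_le_mul_left _ (Nat.factorial_pos n)
  calc n.factorial * (k ^ n * (B + n - 1).choose n)
      = k ^ n * (n.factorial * (B + n - 1).choose n) := by ring
    _ ≤ B ^ n * (n.factorial * (k + n - 1).choose n) := h
    _ = n.factorial * (B ^ n * (k + n - 1).choose n) := by ring
end

section
/- For all natural numbers n ≥ 2 and 1 ≤ k < B, one has the strict inequality k^n · C(B+n−1, n) < B^n · C(k+n−1, n), where C(a,b) denotes the binomial coefficient. -/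
lemma ascFactorial_prod (m n : ℕ) : m.ascFactorial n = ∏ i ∈ Finset.range n, (m + i) := by
  induction n with
  | zero => simp
  | succ n ih => rw [Nat.ascFactorial_succ, Finset.prod_range_succ, ih, mul_comm]

/-- For all natural numbers `n ≥ 2` and `1 ≤ k < B`, the strict inequality
`k^n * C(B+n-1, n) < B^n * C(k+n-1, n)` holds. -/
theorem multiset_ratio_gt_string_ratio (n k B : ℕ) (hn : 2 ≤ n) (hk : 1 ≤ k) (hkB : k < B) :
    k ^ n * (B + n - 1).choose n < B ^ n * (k + n - 1).choose n := by
  have hB : 1 ≤ B := hk.trans hkB.le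
  have hchoose : ∀ m : ℕ, 1 ≤ m → n.factorial * (m + n - 1).choose n
      = ∏ i ∈ Finset.range n, (m + i) := by
    intro m hm
    obtain ⟨m', rfl⟩ := Nat.exists_eq_succ_of_ne_zero (by omega : m ≠ 0)
    rw [← ascFactorial_prod, Nat.ascFactorial_eq_factorial_mul_choose]
    congr 2
    omega
  have key : ∏ i ∈ Finset.range n, (k * (B + i)) < ∏ i ∈ Finset.range n, (B * (k + i)) := by
    apply Finset.prod_lt_prod
    · intro i _; positivity
    · intro i _; nlinarith [Nat.le_of_lt hkB]
    · refine ⟨1, Finset.mem_range.mpr (by omega), ?_⟩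
      nlinarith
  rw [Finset.prod_mul_distrib, Finset.prod_const, Finset.card_range,
      Finset.prod_mul_distrib, Finset.prod_const, Finset.card_range,
      ← hchoose B hB, ← hchoose k hk] at key
  have := Nat.factorial_pos n
  exact Nat.lt_of_mul_lt_mul_left (a := n.factorial) (by linarith [key])
end

section
/- For all natural numbers n and 0 ≤ k ≤ B with B ≥ 1, one has C(k,n) · B^n ≤ C(B,n) · k^n, where C(a,b) denotes the binomial coefficient with C(a,b) = 0 for a < b. Equivalently, the combination-coefficient ratio C(k,n)/C(B,n) is at most the string-coefficient ratio (k/B)^n. -/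
/-- For all naturals `n` and `0 ≤ k ≤ B` with `B ≥ 1`,
`C(k,n) * B^n ≤ C(B,n) * k^n`: the combination-coefficient ratio `C(k,n)/C(B,n)` is
at most the string-coefficient ratio `(k/B)^n`. -/
theorem comb_ratio_le_string_ratio (n k B : ℕ) (hB : 1 ≤ B) (hkB : k ≤ B) :
    k.choose n * B ^ n ≤ B.choose n * k ^ n := by
  have key : k.descFactorial n * B ^ n ≤ B.descFactorial n * k ^ n := by
    rw [Nat.descFactorial_eq_prod_range, Nat.descFactorial_eq_prod_range,
      (by simp : B ^ n = ∏ _i ∈ Finset.range n, B),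
      (by simp : k ^ n = ∏ _i ∈ Finset.range n, k),
      ← Finset.prod_mul_distrib, ← Finset.prod_mul_distrib]
    apply Finset.prod_le_prod' (fun i _ => ?_)
    rw [Nat.sub_mul, Nat.sub_mul, Nat.mul_comm k B]
    exact Nat.sub_le_sub_left (Nat.mul_le_mul_left i hkB) _
  rw [Nat.descFactorial_eq_factorial_mul_choose, Nat.descFactorial_eq_factorial_mul_choose,
    Nat.mul_assoc, Nat.mul_assoc] at key
  exact Nat.le_of_mul_le_mul_left key n.factorial_pos
end

section
/- Let x : Fin B → ℝ be a nondecreasing (sorted) sequence of B real numbers, with B ≥ 1, and let 1 ≤ n ≤ B. Then ∑_{i=1}^{B} x_{(i)} · (C(i+n−1,n) − C(i+n−2,n)) / C(B+n−1,n) ≤ ∑_{i=1}^{B} x_{(i)} · (i^n − (i−1)^n) / B^n; that is, the multiset-based estimator W_n^B is pointwise at most the string-based estimator V_n^B on any sorted sample. -/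
open Finset

/-- Key product inequality: for `k ≤ B`, `B.ascFactorial m * k^m ≤ k.ascFactorial m * B^m`. -/
lemma asc_pow_ineq (k B : ℕ) (hk : k ≤ B) :
    ∀ m : ℕ, B.ascFactorial m * k ^ m ≤ k.ascFactorial m * B ^ m := by
  intro m
  induction m with
  | zero => simp
  | succ m ih =>
    rw [Nat.ascFactorial_succ, Nat.ascFactorial_succ, pow_succ, pow_succ]
    calc (B + m) * B.ascFactorial m * (k ^ m * k)
        = ((B + m) * k) * (B.ascFactorial m * k ^ m) := by ring
      _ ≤ ((k + m) * B) * (k.ascFactorial m * B ^ m) := by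
          apply Nat.mul_le_mul _ ih
          nlinarith
      _ = (k + m) * k.ascFactorial m * (B ^ m * B) := by ring

/-- Choose inequality in ℕ: for `1 ≤ n`, `k ≤ B`,
`(B+n-1).choose n * k^n ≤ (k+n-1).choose n * B^n`. -/
lemma choose_pow_ineq (k B n : ℕ) (hn : 1 ≤ n) (hk : k ≤ B) :
    (B + n - 1).choose n * k ^ n ≤ (k + n - 1).choose n * B ^ n := by
  have h1 := Nat.ascFactorial_eq_factorial_mul_choose' B n
  have h2 := Nat.ascFactorial_eq_factorial_mul_choose' k n
  have key := asc_pow_ineq k B hk n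
  rw [h1, h2] at key
  have hfac : 0 < Nat.factorial n := Nat.factorial_pos n
  have : Nat.factorial n * ((B + n - 1).choose n * k ^ n)
      ≤ Nat.factorial n * ((k + n - 1).choose n * B ^ n) := by
    calc Nat.factorial n * ((B + n - 1).choose n * k ^ n)
        = Nat.factorial n * (B + n - 1).choose n * k ^ n := by ring
      _ ≤ Nat.factorial n * (k + n - 1).choose n * B ^ n := key
      _ = Nat.factorial n * ((k + n - 1).choose n * B ^ n) := by ring
  exact Nat.le_of_mul_le_mul_left this hfac

/-- For a nondecreasing (sorted) sequence `x : Fin B → ℝ` with `B ≥ 1` and `1 ≤ n ≤ B`,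
the multiset-based estimator `W_n^B` is pointwise at most the string-based estimator
`V_n^B`.  Here the `i`-th order statistic `x_{(i)}` (for `i = 1,...,B`) is `x ⟨i-1⟩`,
`W_n^B = ∑ x_{(i)} (C(i+n-1,n) - C(i+n-2,n))/C(B+n-1,n)` and
`V_n^B = ∑ x_{(i)} (i^n - (i-1)^n)/B^n`. -/
theorem W_le_V_on_sorted_sample (B n : ℕ) (hB : 1 ≤ B) (hn : 1 ≤ n) (hnB : n ≤ B)
    (x : Fin B → ℝ) (hx : Monotone x) :
    (∑ i : Fin B, x i *
        ((((i.1 + n).choose n : ℝ) - ((i.1 + n - 1).choose n : ℝ))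
          / ((B + n - 1).choose n : ℝ)))
      ≤ ∑ i : Fin B, x i *
          ((((i.1 : ℝ) + 1) ^ n - ((i.1 : ℝ)) ^ n) / (B : ℝ) ^ n) := by
  -- extend x to ℕ
  set y : ℕ → ℝ := fun i => x ⟨min i (B - 1), by omega⟩ with hy
  have hymono : Monotone y := by
    intro a b hab
    apply hx
    rw [Fin.mk_le_mk]
    omega
  have hyx : ∀ i : Fin B, y i.1 = x i := by
    intro i
    have : min i.1 (B - 1) = i.1 := by omega
    simp [hy, this]
  -- positivity of denominators
  have hCpos : (0 : ℝ) < ((B + n - 1).choose n : ℝ) := by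
    have : 0 < (B + n - 1).choose n := Nat.choose_pos (by omega)
    exact_mod_cast this
  have hBpos : (0 : ℝ) < (B : ℝ) ^ n := by positivity
  -- the CDF difference
  set D : ℕ → ℝ := fun k =>
    ((k + n - 1).choose n : ℝ) / ((B + n - 1).choose n : ℝ) - (k : ℝ) ^ n / (B : ℝ) ^ n with hD
  have hD0 : D 0 = 0 := by
    have h0 : (n - 1).choose n = 0 := Nat.choose_eq_zero_of_lt (by omega)
    simp [hD, h0, zero_pow (by omega : n ≠ 0)]
  have hDB : D B = 0 := by
    simp only [hD]
    rw [div_self (ne_of_gt hCpos), div_self (ne_of_gt hBpos)]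
    ring
  have hDnonneg : ∀ k, k ≤ B → 0 ≤ D k := by
    intro k hk
    have h := choose_pow_ineq k B n hn hk
    have h' : ((B + n - 1).choose n : ℝ) * (k : ℝ) ^ n ≤ ((k + n - 1).choose n : ℝ) * (B : ℝ) ^ n := by
      exact_mod_cast h
    rw [hD, sub_nonneg, div_le_div_iff₀ hBpos hCpos]
    linarith
  -- rewrite both sums over range B with y, as telescoping differences of D
  have hL : (∑ i : Fin B, x i *
        ((((i.1 + n).choose n : ℝ) - ((i.1 + n - 1).choose n : ℝ))
          / ((B + n - 1).choose n : ℝ)))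
      = ∑ i ∈ range B, y i * (((i + 1 + n - 1).choose n : ℝ) / ((B + n - 1).choose n : ℝ)
          - ((i + n - 1).choose n : ℝ) / ((B + n - 1).choose n : ℝ)) := by
    rw [← Fin.sum_univ_eq_sum_range]
    refine Finset.sum_congr rfl fun i _ => ?_
    rw [hyx i]
    have : i.1 + 1 + n - 1 = i.1 + n := by omega
    rw [this]
    ring
  have hR : (∑ i : Fin B, x i *
          ((((i.1 : ℝ) + 1) ^ n - ((i.1 : ℝ)) ^ n) / (B : ℝ) ^ n))
      = ∑ i ∈ range B, y i * (((i : ℝ) + 1) ^ n / (B : ℝ) ^ n - ((i : ℝ)) ^ n / (B : ℝ) ^ n) := by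
    rw [← Fin.sum_univ_eq_sum_range]
    refine Finset.sum_congr rfl fun i _ => ?_
    rw [hyx i]
    ring
  rw [hL, hR, ← sub_nonneg, ← Finset.sum_sub_distrib]
  have hstep : ∀ i ∈ range B,
      y i * (((i : ℝ) + 1) ^ n / (B : ℝ) ^ n - ((i : ℝ)) ^ n / (B : ℝ) ^ n)
        - y i * (((i + 1 + n - 1).choose n : ℝ) / ((B + n - 1).choose n : ℝ)
          - ((i + n - 1).choose n : ℝ) / ((B + n - 1).choose n : ℝ))
      = y i • (D i - D (i + 1)) := by
    intro i _
    have h1 : ((i : ℕ) + 1 : ℝ) = (((i + 1 : ℕ) : ℝ)) := by push_cast; ring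
    simp only [hD, smul_eq_mul, h1]
    ring
  rw [Finset.sum_congr rfl hstep]
  -- Abel summation
  rw [Finset.sum_range_by_parts (fun i => y i) (fun i => D i - D (i + 1)) B]
  rw [Finset.sum_range_sub' D B, hD0, hDB, sub_zero, smul_zero, zero_sub, neg_nonneg]
  apply Finset.sum_nonpos
  intro i hi
  simp only [Finset.mem_range] at hi
  rw [Finset.sum_range_sub' D (i + 1), hD0, zero_sub, smul_eq_mul]
  have h1 : y i ≤ y (i + 1) := hymono (Nat.le_succ i)
  have h2 : 0 ≤ D (i + 1) := hDnonneg (i + 1) (by omega)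
  nlinarith
end

section
/- Let x : Fin B → ℝ be a nondecreasing (sorted) sequence of B real numbers, with B ≥ 1, and let 1 ≤ n ≤ B. Then ∑_{i=1}^{B} x_{(i)} · (i^n − (i−1)^n) / B^n ≤ ∑_{i=1}^{B} x_{(i)} · (C(i,n) − C(i−1,n)) / C(B,n); that is, the string-based estimator V_n^B is pointwise at most the combination-based estimator U_n^B on any sorted sample. -/
open Finset

private lemma abel_aux (f S : ℕ → ℝ) (m : ℕ) :
    ∑ i ∈ range m, f i * (S i - S (i + 1)) =
      f 0 * S 0 - f m * S m + ∑ i ∈ range m, (f (i + 1) - f i) * S (i + 1) := by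
  induction m with
  | zero => simp
  | succ m ih => rw [Finset.sum_range_succ, ih, Finset.sum_range_succ]; ring

private lemma key_nat (n k B : ℕ) (hk : k ≤ B) :
    k.choose n * B ^ n ≤ B.choose n * k ^ n := by
  have h : k.descFactorial n * B ^ n ≤ B.descFactorial n * k ^ n := by
    have hB' : B ^ n = ∏ _i ∈ range n, B := by simp
    have hk' : k ^ n = ∏ _i ∈ range n, k := by simp
    rw [Nat.descFactorial_eq_prod_range, Nat.descFactorial_eq_prod_range, hB', hk',
      ← Finset.prod_mul_distrib, ← Finset.prod_mul_distrib]
    apply Finset.prod_le_prod'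
    intro j _
    rcases le_or_gt j k with hj | hj
    · have : j * k ≤ j * B := Nat.mul_le_mul_left j hk
      calc (k - j) * B = k * B - j * B := by rw [Nat.sub_mul]
        _ ≤ k * B - j * k := Nat.sub_le_sub_left this _
        _ = (B - j) * k := by rw [Nat.sub_mul, Nat.mul_comm k B]
    · simp [Nat.sub_eq_zero_of_le hj.le]
  rw [Nat.descFactorial_eq_factorial_mul_choose, Nat.descFactorial_eq_factorial_mul_choose,
    Nat.mul_assoc, Nat.mul_assoc] at h
  exact Nat.le_of_mul_le_mul_left h (Nat.factorial_pos n)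

/-- For a nondecreasing (sorted) sequence `x : Fin B → ℝ` with `B ≥ 1` and `1 ≤ n ≤ B`,
the string-based estimator `V_n^B` is pointwise at most the combination-based estimator
`U_n^B`.  Here the `i`-th order statistic `x_{(i)}` (for `i = 1,...,B`) is `x ⟨i-1⟩`,
`V_n^B = ∑ x_{(i)} (i^n - (i-1)^n)/B^n` and
`U_n^B = ∑ x_{(i)} (C(i,n) - C(i-1,n))/C(B,n)`. -/
theorem V_le_U_on_sorted_sample (B n : ℕ) (hB : 1 ≤ B) (hn : 1 ≤ n) (hnB : n ≤ B)
    (x : Fin B → ℝ) (hx : Monotone x) :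
    (∑ i : Fin B, x i *
        ((((i.1 : ℝ) + 1) ^ n - ((i.1 : ℝ)) ^ n) / (B : ℝ) ^ n))
      ≤ ∑ i : Fin B, x i *
          ((((i.1 + 1).choose n : ℝ) - ((i.1).choose n : ℝ)) / (B.choose n : ℝ)) := by
  set f : ℕ → ℝ := fun i => x ⟨min i (B - 1), by omega⟩ with hf
  set S : ℕ → ℝ := fun k =>
    (k : ℝ) ^ n / (B : ℝ) ^ n - (k.choose n : ℝ) / (B.choose n : ℝ) with hS
  have hBpos : (0 : ℝ) < (B : ℝ) ^ n := by positivity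
  have hCpos : (0 : ℝ) < (B.choose n : ℝ) := by
    exact_mod_cast Nat.choose_pos hnB
  have hmono : Monotone f := by
    intro a b hab
    exact hx (by simp [Fin.le_def]; omega)
  have hSnn : ∀ k, k ≤ B → 0 ≤ S k := by
    intro k hk
    have := key_nat n k B hk
    have hcast : (k.choose n : ℝ) * (B : ℝ) ^ n ≤ (B.choose n : ℝ) * (k : ℝ) ^ n := by
      exact_mod_cast this
    simp only [hS, sub_nonneg, div_le_div_iff₀ hCpos hBpos]
    linarith
  rw [← sub_nonneg, ← Finset.sum_sub_distrib]
  have hconv : ∀ i : Fin B,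
      x i * ((((i.1 + 1).choose n : ℝ) - ((i.1).choose n : ℝ)) / (B.choose n : ℝ)) -
        x i * ((((i.1 : ℝ) + 1) ^ n - ((i.1 : ℝ)) ^ n) / (B : ℝ) ^ n)
      = f i.1 * (S i.1 - S (i.1 + 1)) := by
    intro i
    have hfx : f i.1 = x i := by
      simp only [hf]
      congr 1
      ext
      simp
      omega
    rw [hfx]
    simp only [hS]
    push_cast
    ring
  rw [Finset.sum_congr rfl (fun i _ => hconv i), Fin.sum_univ_eq_sum_range
    (fun i => f i * (S i - S (i + 1))) B, abel_aux]
  have hS0 : S 0 = 0 := by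
    simp [hS, Nat.choose_eq_zero_of_lt hn, zero_pow (by omega : n ≠ 0)]
  have hSB : S B = 0 := by
    simp only [hS]
    rw [div_self (ne_of_gt hBpos), div_self (ne_of_gt hCpos)]
    ring
  rw [hS0, hSB]
  simp only [mul_zero, sub_zero, zero_add]
  apply Finset.sum_nonneg
  intro i hi
  have hi' : i + 1 ≤ B := by simpa using Finset.mem_range.mp hi
  exact mul_nonneg (sub_nonneg.mpr (hmono (Nat.le_succ i))) (hSnn _ hi')
end

section
/- Let X_1, ..., X_B be integrable, independent and identically distributed real-valued random variables on a probability space, B ≥ 1, and 1 ≤ n ≤ B. For each outcome, let X_{(1)} ≤ ... ≤ X_{(B)} denote the sorted values, and define V_n^B = ∑_{i=1}^B X_{(i)} (i^n − (i−1)^n)/B^n. Then E[V_n^B] ≤ E[max(X_1,...,X_n)]; that is, V_n^B has nonpositive bias as an estimator of the expected maximum of n draws. -/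
open Finset MeasureTheory ProbabilityTheory

section Aux

variable {α : Type*} [MeasurableSpace α] {μ : MeasureTheory.Measure α}

lemma aux_meas_sup' {ι : Type*} {s : Finset ι} (H : s.Nonempty) (f : ι → α → ℝ)
    (hf : ∀ i, Measurable (f i)) :
    Measurable (fun ω => s.sup' H fun i => f i ω) := by
  induction H using Finset.Nonempty.cons_induction with
  | singleton c => simpa using hf c
  | cons c s hcs hs ih =>
    simp only [Finset.sup'_cons hs]
    exact (hf c).sup ih

lemma aux_int_sup' {ι : Type*} {s : Finset ι} (H : s.Nonempty) (f : ι → α → ℝ)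
    (hf : ∀ i, Integrable (f i) μ) :
    Integrable (fun ω => s.sup' H fun i => f i ω) μ := by
  induction H using Finset.Nonempty.cons_induction with
  | singleton c => simpa using hf c
  | cons c s hcs hs ih =>
    simp only [Finset.sup'_cons hs]
    exact (hf c).sup ih

lemma aux_card_lt {B n k : ℕ} (hk : k ≤ B) :
    ((Finset.univ : Finset (Fin n → Fin B)).filter (fun g => ∀ j, (g j : ℕ) < k)).card
      = k ^ n := by
  classical
  have h1 : (Finset.univ : Finset (Fin n → Fin B)).filter (fun g => ∀ j, (g j : ℕ) < k)
      = Fintype.piFinset (fun _ : Fin n =>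
          (Finset.univ.filter (fun x : Fin B => (x : ℕ) < k))) := by
    ext g
    simp [Fintype.mem_piFinset]
  have h2 : (Finset.univ.filter (fun x : Fin B => (x : ℕ) < k)) =
      Finset.univ.map (Fin.castLEOrderEmb hk).toEmbedding := by
    ext x
    simp only [Finset.mem_filter, Finset.mem_univ, true_and, Finset.mem_map]
    constructor
    · intro hx
      exact ⟨⟨x.1, hx⟩, by ext; rfl⟩
    · rintro ⟨y, -, rfl⟩
      exact y.2
  rw [h1, Fintype.card_piFinset, h2]
  simp

lemma aux_card_fiber {B n : ℕ} (ne : (Finset.univ : Finset (Fin n)).Nonempty)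
    (i : Fin B) :
    ((Finset.univ : Finset (Fin n → Fin B)).filter
        (fun g => Finset.univ.sup' ne g = i)).card = ((i : ℕ) + 1) ^ n - (i : ℕ) ^ n := by
  classical
  have hsub : (Finset.univ : Finset (Fin n → Fin B)).filter (fun g => ∀ j, (g j : ℕ) < (i : ℕ))
      ⊆ (Finset.univ : Finset (Fin n → Fin B)).filter
          (fun g => ∀ j, (g j : ℕ) < (i : ℕ) + 1) := by
    intro g hg
    simp only [Finset.mem_filter, Finset.mem_univ, true_and] at hg ⊢
    exact fun j => (hg j).trans (Nat.lt_succ_self _)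
  have heq : (Finset.univ : Finset (Fin n → Fin B)).filter
        (fun g => Finset.univ.sup' ne g = i)
      = (Finset.univ : Finset (Fin n → Fin B)).filter
          (fun g => ∀ j, (g j : ℕ) < (i : ℕ) + 1)
        \ (Finset.univ : Finset (Fin n → Fin B)).filter
            (fun g => ∀ j, (g j : ℕ) < (i : ℕ)) := by
    ext g
    simp only [Finset.mem_filter, Finset.mem_univ, true_and, Finset.mem_sdiff, not_forall]
    constructor
    · rintro rfl
      refine ⟨fun j => ?_, ?_⟩
      · have hle : g j ≤ Finset.univ.sup' ne g := Finset.le_sup' g (Finset.mem_univ j)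
        exact Nat.lt_succ_of_le (Fin.le_def.mp hle)
      · obtain ⟨j, -, hj⟩ := Finset.exists_mem_eq_sup' ne g
        exact ⟨j, by rw [hj]; exact lt_irrefl _⟩
    · rintro ⟨h1, j, hj⟩
      refine le_antisymm ?_ ?_
      · exact Finset.sup'_le ne g fun b _ => Fin.le_def.mpr (Nat.lt_succ_iff.mp (h1 b))
      · have hle : g j ≤ Finset.univ.sup' ne g := Finset.le_sup' g (Finset.mem_univ j)
        exact le_trans (Fin.le_def.mpr (Nat.le_of_not_lt hj)) hle
  rw [heq, Finset.card_sdiff_of_subset hsub, aux_card_lt (Nat.succ_le_of_lt i.2), aux_card_lt (le_of_lt i.2)]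

lemma aux_map_pi {B n : ℕ} (μ : MeasureTheory.Measure α) [IsProbabilityMeasure μ]
    (X : Fin B → α → ℝ) (hmeas : ∀ i, Measurable (X i))
    (hindep : iIndepFun X μ)
    (h : Fin n → Fin B) (hinj : Function.Injective h) :
    μ.map (fun ω (i : Fin n) => X (h i) ω)
      = MeasureTheory.Measure.pi (fun i => μ.map (X (h i))) := by
  classical
  refine (MeasureTheory.Measure.pi_eq ?_).symm
  intro s hs
  have hmt : Measurable (fun ω (i : Fin n) => X (h i) ω) :=
    measurable_pi_iff.mpr fun i => hmeas _
  rw [MeasureTheory.Measure.map_apply hmt (MeasurableSet.univ_pi hs)]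
  set sets : Fin B → Set ℝ :=
    fun j => if hj : ∃ i, h i = j then s hj.choose else Set.univ with hsets
  have hsets_h : ∀ i, sets (h i) = s i := by
    intro i
    have hj : ∃ i', h i' = h i := ⟨i, rfl⟩
    simp only [hsets, dif_pos hj]
    exact congrArg s (hinj hj.choose_spec)
  have hpre : (fun ω (i : Fin n) => X (h i) ω) ⁻¹' Set.pi Set.univ s
      = ⋂ j ∈ Finset.univ.map ⟨h, hinj⟩, X j ⁻¹' sets j := by
    ext ω
    simp only [Set.mem_preimage, Set.mem_pi, Set.mem_univ, true_implies, Set.mem_iInter,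
      Finset.mem_map, Finset.mem_univ, Function.Embedding.coeFn_mk, true_and]
    constructor
    · rintro hω j ⟨i, rfl⟩
      rw [hsets_h]
      exact hω i
    · intro hω i
      have := hω (h i) ⟨i, rfl⟩
      rwa [hsets_h] at this
  have hmeas_sets : ∀ j, j ∈ Finset.univ.map ⟨h, hinj⟩ → MeasurableSet (sets j) := by
    intro j _
    by_cases hj : ∃ i, h i = j
    · simp only [hsets, dif_pos hj]
      exact hs _
    · simp [hsets, dif_neg hj]
  rw [hpre, hindep.measure_inter_preimage_eq_mul _ hmeas_sets, Finset.prod_map]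
  refine Finset.prod_congr rfl fun i _ => ?_
  rw [Function.Embedding.coeFn_mk, hsets_h,
    MeasureTheory.Measure.map_apply (hmeas _) (hs i)]

lemma aux_integral_sup'_le {B n : ℕ} (μ : MeasureTheory.Measure α) [IsProbabilityMeasure μ]
    (hnB : n ≤ B)
    (ne : (Finset.univ : Finset (Fin n)).Nonempty)
    (X : Fin B → α → ℝ) (hmeas : ∀ i, Measurable (X i))
    (hint : ∀ i, Integrable (X i) μ)
    (hindep : iIndepFun X μ)
    (hident : ∀ i j, IdentDistrib (X i) (X j) μ μ)
    (g : Fin n → Fin B) :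
    ∫ ω, Finset.univ.sup' ne (fun j => X (g j) ω) ∂μ
      ≤ ∫ ω, Finset.univ.sup' ne (fun j => X (Fin.castLE hnB j) ω) ∂μ := by
  classical
  -- find an injection `h : Fin n → Fin B` whose range contains the range of `g`
  have h1 : (Finset.univ.image g).card ≤ n := le_trans Finset.card_image_le (by simp)
  have h2 : n ≤ (Finset.univ : Finset (Fin B)).card := by simpa using hnB
  obtain ⟨t, hsubt, -, hcard⟩ :=
    Finset.exists_subsuperset_card_eq (Finset.subset_univ (Finset.univ.image g)) h1 h2
  have e : Fin n ≃ {x // x ∈ t} := (t.equivFin.trans (finCongr hcard)).symm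
  set h : Fin n → Fin B := fun i => (e i : Fin B) with hh
  have hinj : Function.Injective h := fun a b hab => e.injective (Subtype.ext hab)
  have hrange : ∀ j : Fin n, ∃ i : Fin n, h i = g j := by
    intro j
    have : g j ∈ t := hsubt (Finset.mem_image_of_mem g (Finset.mem_univ j))
    exact ⟨e.symm ⟨g j, this⟩, by simp [hh]⟩
  -- pointwise bound
  have hpt : ∀ ω, Finset.univ.sup' ne (fun j => X (g j) ω)
      ≤ Finset.univ.sup' ne (fun j => X (h j) ω) := by
    intro ω
    refine Finset.sup'_le ne _ fun j _ => ?_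
    obtain ⟨i, hi⟩ := hrange j
    calc X (g j) ω = X (h i) ω := by rw [hi]
      _ ≤ _ := Finset.le_sup' (fun j => X (h j) ω) (Finset.mem_univ i)
  have hint1 : Integrable (fun ω => Finset.univ.sup' ne (fun j => X (g j) ω)) μ :=
    aux_int_sup' ne _ fun j => hint _
  have hint2 : Integrable (fun ω => Finset.univ.sup' ne (fun j => X (h j) ω)) μ :=
    aux_int_sup' ne _ fun j => hint _
  have step1 : ∫ ω, Finset.univ.sup' ne (fun j => X (g j) ω) ∂μ
      ≤ ∫ ω, Finset.univ.sup' ne (fun j => X (h j) ω) ∂μ :=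
    integral_mono hint1 hint2 hpt
  -- identically distributed tuples
  have hcastinj : Function.Injective (Fin.castLE hnB) := Fin.castLE_injective hnB
  have hmap : μ.map (fun ω (i : Fin n) => X (h i) ω)
      = μ.map (fun ω (i : Fin n) => X (Fin.castLE hnB i) ω) := by
    rw [aux_map_pi μ X hmeas hindep h hinj,
      aux_map_pi μ X hmeas hindep (Fin.castLE hnB) hcastinj]
    congr 1
    funext i
    exact (hident (h i) (Fin.castLE hnB i)).map_eq
  have hid : IdentDistrib (fun ω (i : Fin n) => X (h i) ω)
      (fun ω (i : Fin n) => X (Fin.castLE hnB i) ω) μ μ :=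
    ⟨(measurable_pi_iff.mpr fun i => hmeas _).aemeasurable,
      (measurable_pi_iff.mpr fun i => hmeas _).aemeasurable, hmap⟩
  have hF : Measurable (fun v : Fin n → ℝ => Finset.univ.sup' ne (fun j => v j)) :=
    aux_meas_sup' ne (fun j (v : Fin n → ℝ) => v j) fun j => measurable_pi_apply j
  have hid2 := hid.comp hF
  have step2 : ∫ ω, Finset.univ.sup' ne (fun j => X (h j) ω) ∂μ
      = ∫ ω, Finset.univ.sup' ne (fun j => X (Fin.castLE hnB j) ω) ∂μ :=
    hid2.integral_eq
  exact step1.trans_eq step2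

end Aux

/-- Let `X 0, ..., X (B-1)` be integrable, i.i.d. real random variables on a probability
space, `B ≥ 1`, `1 ≤ n ≤ B`, and let `Y` give, for each outcome, the sorted values
(order statistics) of the `X i`.  With
`V_n^B = ∑_{i=1}^B X_{(i)} (i^n - (i-1)^n)/B^n`, we have
`E[V_n^B] ≤ E[max(X_1,...,X_n)]`: the estimator `V_n^B` has nonpositive bias for the
expected maximum of `n` draws. -/
theorem V_has_nonpositive_bias {Ω : Type*} [MeasurableSpace Ω]
    (μ : MeasureTheory.Measure Ω) [IsProbabilityMeasure μ]
    {B n : ℕ} (hB : 1 ≤ B) (hn : 1 ≤ n) (hnB : n ≤ B)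
    (X : Fin B → Ω → ℝ)
    (hmeas : ∀ i, Measurable (X i))
    (hint : ∀ i, Integrable (X i) μ)
    (hindep : iIndepFun X μ)
    (hident : ∀ i j, IdentDistrib (X i) (X j) μ μ)
    (Y : Fin B → Ω → ℝ)
    (hsorted : ∀ ω, Monotone fun i => Y i ω)
    (hperm : ∀ ω, ∃ σ : Equiv.Perm (Fin B), ∀ i, Y i ω = X (σ i) ω) :
    (∫ ω, ∑ i : Fin B, Y i ω *
        ((((i.1 : ℝ) + 1) ^ n - ((i.1 : ℝ)) ^ n) / (B : ℝ) ^ n) ∂μ)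
      ≤ ∫ ω, Finset.univ.sup'
          (Finset.univ_nonempty_iff.mpr (Fin.pos_iff_nonempty.mp hn))
          (fun i : Fin n => X (Fin.castLE hnB i) ω) ∂μ := by
  classical
  set ne : (Finset.univ : Finset (Fin n)).Nonempty :=
    Finset.univ_nonempty_iff.mpr (Fin.pos_iff_nonempty.mp hn) with hne
  have hBpos : (0 : ℝ) < (B : ℝ) ^ n := by positivity
  -- pointwise identity
  have key : ∀ ω, ∑ i : Fin B, Y i ω *
        ((((i.1 : ℝ) + 1) ^ n - ((i.1 : ℝ)) ^ n) / (B : ℝ) ^ n)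
      = (∑ f : Fin n → Fin B, Finset.univ.sup' ne (fun j => X (f j) ω)) / (B : ℝ) ^ n := by
    intro ω
    obtain ⟨σ, hσ⟩ := hperm ω
    have h1 : ∀ f : Fin n → Fin B, Y (Finset.univ.sup' ne f) ω
        = Finset.univ.sup' ne (fun j => Y (f j) ω) :=
      fun f => Finset.comp_sup'_eq_sup'_comp ne (fun i => Y i ω)
        (fun x y => Monotone.map_sup (hsorted ω) x y)
    have h2 : ∑ f : Fin n → Fin B, Y (Finset.univ.sup' ne f) ω
        = ∑ i : Fin B, (((((i : ℕ) + 1) ^ n - (i : ℕ) ^ n : ℕ)) : ℝ) * Y i ω := by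
      rw [← Finset.sum_fiberwise' (Finset.univ : Finset (Fin n → Fin B))
        (fun f => Finset.univ.sup' ne f) (fun i => Y i ω)]
      refine Finset.sum_congr rfl fun i _ => ?_
      rw [Finset.sum_const, aux_card_fiber ne i, nsmul_eq_mul]
    have h3 : ∀ f : Fin n → Fin B, Finset.univ.sup' ne (fun j => Y (f j) ω)
        = Finset.univ.sup' ne (fun j => X (σ (f j)) ω) := by
      intro f
      exact Finset.sup'_congr ne rfl fun j _ => hσ (f j)
    have h4 : ∑ f : Fin n → Fin B, Finset.univ.sup' ne (fun j => X (σ (f j)) ω)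
        = ∑ f : Fin n → Fin B, Finset.univ.sup' ne (fun j => X (f j) ω) := by
      have := Equiv.sum_comp (Equiv.arrowCongr (Equiv.refl (Fin n)) σ)
        (fun f : Fin n → Fin B => Finset.univ.sup' ne (fun j => X (f j) ω))
      simpa [Equiv.arrowCongr, Function.comp] using this
    have hcoef : ∀ i : Fin B, (((((i : ℕ) + 1) ^ n - (i : ℕ) ^ n : ℕ)) : ℝ)
        = (((i.1 : ℝ) + 1) ^ n - ((i.1 : ℝ)) ^ n) := by
      intro i
      have hle : (i : ℕ) ^ n ≤ ((i : ℕ) + 1) ^ n :=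
        Nat.pow_le_pow_left (Nat.le_succ _) n
      push_cast [Nat.cast_sub hle]
      ring
    calc ∑ i : Fin B, Y i ω * ((((i.1 : ℝ) + 1) ^ n - ((i.1 : ℝ)) ^ n) / (B : ℝ) ^ n)
        = (∑ i : Fin B, (((i.1 : ℝ) + 1) ^ n - ((i.1 : ℝ)) ^ n) * Y i ω) / (B : ℝ) ^ n := by
          rw [Finset.sum_div]
          exact Finset.sum_congr rfl fun i _ => by ring
      _ = (∑ f : Fin n → Fin B, Finset.univ.sup' ne (fun j => X (f j) ω)) / (B : ℝ) ^ n := by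
          rw [← h4]
          congr 1
          rw [← Finset.sum_congr rfl fun f (_ : f ∈ Finset.univ) => (h3 f)]
          rw [← Finset.sum_congr rfl fun f (_ : f ∈ Finset.univ) => (h1 f)]
          rw [h2]
          exact Finset.sum_congr rfl fun i _ => by rw [hcoef]
  calc (∫ ω, ∑ i : Fin B, Y i ω *
        ((((i.1 : ℝ) + 1) ^ n - ((i.1 : ℝ)) ^ n) / (B : ℝ) ^ n) ∂μ)
      = ∫ ω, (∑ f : Fin n → Fin B,
          Finset.univ.sup' ne (fun j => X (f j) ω)) / (B : ℝ) ^ n ∂μ := by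
        exact integral_congr_ae (Filter.Eventually.of_forall key)
    _ = (∑ f : Fin n → Fin B,
          ∫ ω, Finset.univ.sup' ne (fun j => X (f j) ω) ∂μ) / (B : ℝ) ^ n := by
        rw [integral_div, integral_finset_sum]
        exact fun f _ => aux_int_sup' ne _ fun j => hint _
    _ ≤ (∑ f : Fin n → Fin B,
          ∫ ω, Finset.univ.sup' ne (fun j => X (Fin.castLE hnB j) ω) ∂μ) / (B : ℝ) ^ n := by
        refine div_le_div_of_nonneg_right ?_ hBpos.le
        exact Finset.sum_le_sum fun f _ =>
          aux_integral_sup'_le μ hnB ne X hmeas hint hindep hident f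
    _ = ∫ ω, Finset.univ.sup' ne (fun i : Fin n => X (Fin.castLE hnB i) ω) ∂μ := by
        rw [Finset.sum_const, Finset.card_univ, Fintype.card_fun, Fintype.card_fin,
          Fintype.card_fin, nsmul_eq_mul]
        push_cast
        field_simp
end

section
/- Let X_1, ..., X_B be integrable, independent and identically distributed real-valued random variables on a probability space, B ≥ 1, and 1 ≤ n ≤ B. For each outcome, let X_{(1)} ≤ ... ≤ X_{(B)} denote the sorted values, and define U_n^B = ∑_{i=1}^B X_{(i)} (C(i,n) − C(i−1,n))/C(B,n), where C(a,b) is the binomial coefficient with C(a,b) = 0 for a < b. Then E[U_n^B] = E[max(X_1,...,X_n)]; that is, U_n^B is an unbiased estimator of the expected maximum of n draws. -/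
open Finset MeasureTheory ProbabilityTheory


/-- sup' of a monotone function is the value at max'. -/
lemma sup'_eq_max' {B : ℕ} (y : Fin B → ℝ) (hy : Monotone y) (S : Finset (Fin B))
    (hS : S.Nonempty) : S.sup' hS y = y (S.max' hS) := by
  refine le_antisymm (Finset.sup'_le _ _ fun b hb => hy (S.le_max' b hb))
    (Finset.le_sup' _ (S.max'_mem hS))

/-- Integrability of a finite sup. -/
lemma integrable_sup' {Ω : Type*} [MeasurableSpace Ω] (μ : Measure Ω) {ι : Type*}
    (S : Finset ι) (hS : S.Nonempty) (X : ι → Ω → ℝ) (hint : ∀ i, Integrable (X i) μ) :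
    Integrable (fun ω => S.sup' hS (fun i => X i ω)) μ := by
  induction hS using Finset.Nonempty.cons_induction with
  | singleton i =>
      have h : (fun ω => Finset.sup' {i} (Finset.singleton_nonempty i) fun j => X j ω) = X i := by
        funext ω; simp
      rw [h]
      exact hint i
  | cons i s hi hs ih =>
      simp only [Finset.sup'_cons (H := hs)]
      exact (hint i).sup ih

/-- Law of an injectively-reindexed iid independent family is the product of marginals. -/
lemma law_eq_pi {Ω : Type*} [MeasurableSpace Ω] (μ : Measure Ω) [IsProbabilityMeasure μ]
    {B n : ℕ} (X : Fin B → Ω → ℝ) (hmeas : ∀ i, Measurable (X i))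
    (hindep : iIndepFun X μ)
    (f : Fin n → Fin B) (hf : Function.Injective f) :
    μ.map (fun ω (k : Fin n) => X (f k) ω) = Measure.pi (fun k => μ.map (X (f k))) := by
  classical
  haveI : ∀ k : Fin n, IsProbabilityMeasure (μ.map (X (f k))) :=
    fun k => Measure.isProbabilityMeasure_map (hmeas (f k)).aemeasurable
  refine (Measure.pi_eq (μ := fun k => μ.map (X (f k))) fun s hs => ?_).symm
  have hmv : Measurable (fun ω (k : Fin n) => X (f k) ω) :=
    measurable_pi_lambda _ fun k => hmeas (f k)
  rw [Measure.map_apply hmv (MeasurableSet.univ_pi hs)]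
  have hpre : (fun ω (k : Fin n) => X (f k) ω) ⁻¹' (Set.pi Set.univ s)
      = ⋂ k : Fin n, X (f k) ⁻¹' s k := by
    ext ω; simp [Set.mem_pi]
  rw [hpre]
  set sets' : Fin B → Set ℝ := fun i =>
    if h : ∃ k, f k = i then s h.choose else Set.univ with hsets'
  have hsets'_eq : ∀ k, sets' (f k) = s k := by
    intro k
    have h : ∃ k', f k' = f k := ⟨k, rfl⟩
    simp only [hsets', dif_pos h]
    rw [hf h.choose_spec]
  have h1 : (⋂ k : Fin n, X (f k) ⁻¹' s k)
      = ⋂ i ∈ Finset.image f Finset.univ, X i ⁻¹' sets' i := by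
    ext ω
    simp only [Set.mem_iInter, Finset.mem_image, Finset.mem_univ, true_and]
    constructor
    · rintro h i ⟨k, rfl⟩; rw [hsets'_eq]; exact h k
    · intro h k; rw [← hsets'_eq k]; exact h _ ⟨k, rfl⟩
  rw [h1, hindep.measure_inter_preimage_eq_mul (Finset.image f Finset.univ)
    (sets := sets') ?_]
  · rw [Finset.prod_image (fun a _ b _ h => hf h)]
    refine Finset.prod_congr rfl fun k _ => ?_
    rw [hsets'_eq, Measure.map_apply (hmeas (f k)) (hs k)]
  · intro i hi
    obtain ⟨k, -, rfl⟩ := Finset.mem_image.mp hi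
    rw [hsets'_eq]; exact hs k

/-- Key: expectations of maxima over injectively-reindexed n-tuples coincide. -/
lemma integral_sup_eq {Ω : Type*} [MeasurableSpace Ω] (μ : Measure Ω) [IsProbabilityMeasure μ]
    {B n : ℕ} (X : Fin B → Ω → ℝ) (hmeas : ∀ i, Measurable (X i))
    (hindep : iIndepFun X μ)
    (hident : ∀ i j, IdentDistrib (X i) (X j) μ μ)
    (f g : Fin n → Fin B) (hf : Function.Injective f) (hg : Function.Injective g)
    (hne : (Finset.univ : Finset (Fin n)).Nonempty) :
    ∫ ω, (Finset.univ : Finset (Fin n)).sup' hne (fun k => X (f k) ω) ∂μ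
      = ∫ ω, (Finset.univ : Finset (Fin n)).sup' hne (fun k => X (g k) ω) ∂μ := by
  have hmf : Measurable (fun ω (k : Fin n) => X (f k) ω) :=
    measurable_pi_lambda _ fun k => hmeas (f k)
  have hmg : Measurable (fun ω (k : Fin n) => X (g k) ω) :=
    measurable_pi_lambda _ fun k => hmeas (g k)
  have hid : IdentDistrib (fun ω (k : Fin n) => X (f k) ω)
      (fun ω (k : Fin n) => X (g k) ω) μ μ := by
    refine ⟨hmf.aemeasurable, hmg.aemeasurable, ?_⟩
    rw [law_eq_pi μ X hmeas hindep f hf, law_eq_pi μ X hmeas hindep g hg]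
    congr 1
    funext k
    exact (hident (f k) (g k)).map_eq
  have hF : Measurable (fun v : Fin n → ℝ => Finset.univ.sup' hne v) := by
    have h := Finset.measurable_sup' hne (f := fun (k : Fin n) (v : Fin n → ℝ) => v k)
      (fun k _ => measurable_pi_apply k)
    have : (Finset.univ.sup' hne fun (k : Fin n) (v : Fin n → ℝ) => v k)
        = fun v : Fin n → ℝ => Finset.univ.sup' hne v := by
      funext v
      rw [Finset.sup'_apply]
    rwa [this] at h
  exact (hid.comp hF).integral_eq

lemma choose_cast_sub (i m : ℕ) :
    ((i + 1).choose (m + 1) : ℝ) - (i.choose (m + 1) : ℝ) = (i.choose m : ℝ) := by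
  rw [Nat.choose_succ_succ']
  push_cast; ring

/-- The number of `n`-subsets of `Fin B` with maximum `i` is `C(i, n-1)`. -/
lemma count_max' {B n : ℕ} (hn : 1 ≤ n) (hB : 0 < B) (i : Fin B) :
    ((Finset.powersetCard n (Finset.univ : Finset (Fin B))).filter
      (fun S => (if h : S.Nonempty then S.max' h else ⟨0, hB⟩) = i)).card
      = (i.1).choose (n - 1) := by
  classical
  have key : ((Finset.powersetCard n (Finset.univ : Finset (Fin B))).filter
      (fun S => (if h : S.Nonempty then S.max' h else ⟨0, hB⟩) = i)).card
      = (Finset.powersetCard (n - 1) (Finset.Iio i)).card := by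
    refine Finset.card_nbij' (fun S => S.erase i) (fun T => insert i T) ?_ ?_ ?_ ?_
    · intro S hS
      obtain ⟨hSP, hgi⟩ := Finset.mem_filter.mp hS
      obtain ⟨-, hcard⟩ := Finset.mem_powersetCard.mp hSP
      have hne : S.Nonempty := Finset.card_pos.mp (hcard ▸ hn)
      rw [dif_pos hne] at hgi
      have hiS : i ∈ S := hgi ▸ S.max'_mem hne
      refine Finset.mem_powersetCard.mpr ⟨?_, ?_⟩
      · intro j hj
        obtain ⟨hji, hjS⟩ := Finset.mem_erase.mp hj
        exact Finset.mem_Iio.mpr (lt_of_le_of_ne (hgi ▸ S.le_max' j hjS) hji)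
      · rw [Finset.card_erase_of_mem hiS, hcard]
    · intro T hT
      obtain ⟨hTsub, hTcard⟩ := Finset.mem_powersetCard.mp hT
      have hiT : i ∉ T := fun h => lt_irrefl i (Finset.mem_Iio.mp (hTsub h))
      have hne : (insert i T).Nonempty := Finset.insert_nonempty i T
      refine Finset.mem_filter.mpr ⟨Finset.mem_powersetCard.mpr
        ⟨Finset.subset_univ _, ?_⟩, ?_⟩
      · rw [Finset.card_insert_of_notMem hiT, hTcard]
        omega
      · rw [dif_pos hne]
        refine le_antisymm (Finset.max'_le _ _ _ fun j hj => ?_)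
          (Finset.le_max' _ _ (Finset.mem_insert_self i T))
        rcases Finset.mem_insert.mp hj with rfl | hj
        · exact le_refl j
        · exact le_of_lt (Finset.mem_Iio.mp (hTsub hj))
    · intro S hS
      obtain ⟨hSP, hgi⟩ := Finset.mem_filter.mp hS
      obtain ⟨-, hcard⟩ := Finset.mem_powersetCard.mp hSP
      have hne : S.Nonempty := Finset.card_pos.mp (hcard ▸ hn)
      rw [dif_pos hne] at hgi
      exact Finset.insert_erase (hgi ▸ S.max'_mem hne)
    · intro T hT
      obtain ⟨hTsub, -⟩ := Finset.mem_powersetCard.mp hT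
      exact Finset.erase_insert (fun h => lt_irrefl i (Finset.mem_Iio.mp (hTsub h)))
  rw [key, Finset.card_powersetCard, Fin.card_Iio]

/-- Weighted sum of values equals sum over all `n`-subsets of the value at the subset max. -/
lemma comb_sum {B n : ℕ} (hn : 1 ≤ n) (hB : 0 < B) (y : Fin B → ℝ) :
    ∑ S ∈ Finset.powersetCard n (Finset.univ : Finset (Fin B)),
        (if h : S.Nonempty then y (S.max' h) else 0)
      = ∑ i : Fin B, ((i.1).choose (n - 1) : ℝ) * y i := by
  classical
  rw [← Finset.sum_fiberwise_of_maps_to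
    (g := fun S => if h : S.Nonempty then S.max' h else (⟨0, hB⟩ : Fin B))
    (t := Finset.univ) (fun S _ => Finset.mem_univ _)]
  refine Finset.sum_congr rfl fun i _ => ?_
  have hval : ∀ S ∈ (Finset.powersetCard n (Finset.univ : Finset (Fin B))).filter
      (fun S => (if h : S.Nonempty then S.max' h else ⟨0, hB⟩) = i),
      (if h : S.Nonempty then y (S.max' h) else 0) = y i := by
    intro S hS
    obtain ⟨hSP, hgi⟩ := Finset.mem_filter.mp hS
    have hne : S.Nonempty := Finset.card_pos.mp
      ((Finset.mem_powersetCard.mp hSP).2 ▸ hn)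
    rw [dif_pos hne] at hgi ⊢
    rw [hgi]
  rw [Finset.sum_congr rfl hval, Finset.sum_const, count_max' hn hB i, nsmul_eq_mul]

/-- Sum over all `n`-subsets of the subset sup is invariant under permuting the family. -/
lemma perm_sum {B n : ℕ} (σ : Equiv.Perm (Fin B)) (v : Fin B → ℝ) :
    ∑ S ∈ Finset.powersetCard n (Finset.univ : Finset (Fin B)),
        (if h : S.Nonempty then S.sup' h (fun j => v (σ j)) else 0)
      = ∑ S ∈ Finset.powersetCard n (Finset.univ : Finset (Fin B)),
        (if h : S.Nonempty then S.sup' h v else 0) := by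
  classical
  refine Finset.sum_nbij' (fun S => S.map σ.toEmbedding)
    (fun T => T.map σ.symm.toEmbedding) ?_ ?_ ?_ ?_ ?_
  · intro S hS
    obtain ⟨-, hcard⟩ := Finset.mem_powersetCard.mp hS
    exact Finset.mem_powersetCard.mpr ⟨Finset.subset_univ _, by rw [Finset.card_map, hcard]⟩
  · intro T hT
    obtain ⟨-, hcard⟩ := Finset.mem_powersetCard.mp hT
    exact Finset.mem_powersetCard.mpr ⟨Finset.subset_univ _, by rw [Finset.card_map, hcard]⟩
  · intro S _
    ext x
    simp
  · intro T _
    ext x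
    simp
  · intro S _
    by_cases hne : S.Nonempty
    · rw [dif_pos hne, dif_pos ((Finset.map_nonempty).mpr hne)]
      rw [Finset.sup'_map]
      rfl
    · rw [dif_neg hne, dif_neg (fun h => hne ((Finset.map_nonempty).mp h))]


/-- Let `X 0, ..., X (B-1)` be integrable, i.i.d. real random variables on a probability
space, `B ≥ 1`, `1 ≤ n ≤ B`, and let `Y` give, for each outcome, the sorted values
(order statistics) of the `X i`.  With
`U_n^B = ∑_{i=1}^B X_{(i)} (C(i,n) - C(i-1,n))/C(B,n)`, we have
`E[U_n^B] = E[max(X_1,...,X_n)]`: `U_n^B` is an unbiased estimator of the expected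
maximum of `n` draws. -/
theorem U_is_unbiased {Ω : Type*} [MeasurableSpace Ω]
    (μ : MeasureTheory.Measure Ω) [IsProbabilityMeasure μ]
    {B n : ℕ} (hB : 1 ≤ B) (hn : 1 ≤ n) (hnB : n ≤ B)
    (X : Fin B → Ω → ℝ)
    (hmeas : ∀ i, Measurable (X i))
    (hint : ∀ i, Integrable (X i) μ)
    (hindep : iIndepFun X μ)
    (hident : ∀ i j, IdentDistrib (X i) (X j) μ μ)
    (Y : Fin B → Ω → ℝ)
    (hsorted : ∀ ω, Monotone fun i => Y i ω)
    (hperm : ∀ ω, ∃ σ : Equiv.Perm (Fin B), ∀ i, Y i ω = X (σ i) ω) :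
    (∫ ω, ∑ i : Fin B, Y i ω *
        ((((i.1 + 1).choose n : ℝ) - ((i.1).choose n : ℝ)) / (B.choose n : ℝ)) ∂μ)
      = ∫ ω, Finset.univ.sup'
          (Finset.univ_nonempty_iff.mpr (Fin.pos_iff_nonempty.mp hn))
          (fun i : Fin n => X (Fin.castLE hnB i) ω) ∂μ := by
  classical
  have hBpos : 0 < B := hB
  set P := Finset.powersetCard n (Finset.univ : Finset (Fin B)) with hPdef
  have hCpos : 0 < B.choose n := Nat.choose_pos hnB
  have hC : (B.choose n : ℝ) ≠ 0 := ne_of_gt (by exact_mod_cast hCpos)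
  have hneS : ∀ S ∈ P, S.Nonempty := fun S hS =>
    Finset.card_pos.mp ((Finset.mem_powersetCard.mp hS).2 ▸ hn)
  have hne' : (Finset.univ : Finset (Fin n)).Nonempty :=
    Finset.univ_nonempty_iff.mpr (Fin.pos_iff_nonempty.mp hn)
  -- pointwise identity
  have hpt : ∀ ω, ∑ i : Fin B, Y i ω *
      ((((i.1 + 1).choose n : ℝ) - ((i.1).choose n : ℝ)) / (B.choose n : ℝ))
      = (B.choose n : ℝ)⁻¹ *
        ∑ S ∈ P, (if h : S.Nonempty then S.sup' h (fun j => X j ω) else 0) := by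
    intro ω
    obtain ⟨σ, hσ⟩ := hperm ω
    have step1 : ∑ i : Fin B, Y i ω *
        ((((i.1 + 1).choose n : ℝ) - ((i.1).choose n : ℝ)) / (B.choose n : ℝ))
        = (B.choose n : ℝ)⁻¹ * ∑ i : Fin B, ((i.1).choose (n - 1) : ℝ) * Y i ω := by
      rw [Finset.mul_sum]
      refine Finset.sum_congr rfl fun i _ => ?_
      obtain ⟨m, rfl⟩ : ∃ m, n = m + 1 := ⟨n - 1, (Nat.succ_pred_eq_of_pos hn).symm⟩
      rw [choose_cast_sub]
      simp only [Nat.add_sub_cancel]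
      ring
    have step2 : ∑ i : Fin B, ((i.1).choose (n - 1) : ℝ) * Y i ω
        = ∑ S ∈ P, (if h : S.Nonempty then (fun j => Y j ω) (S.max' h) else 0) :=
      (comb_sum hn hBpos (fun j => Y j ω)).symm
    have step3 : ∑ S ∈ P, (if h : S.Nonempty then (fun j => Y j ω) (S.max' h) else 0)
        = ∑ S ∈ P, (if h : S.Nonempty then S.sup' h (fun j => Y j ω) else 0) := by
      refine Finset.sum_congr rfl fun S hS => ?_
      rw [dif_pos (hneS S hS), dif_pos (hneS S hS),
        sup'_eq_max' (fun j => Y j ω) (hsorted ω) S (hneS S hS)]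
    have step4 : ∑ S ∈ P, (if h : S.Nonempty then S.sup' h (fun j => Y j ω) else 0)
        = ∑ S ∈ P, (if h : S.Nonempty then S.sup' h (fun j => X j ω) else 0) := by
      have hY : (fun j => Y j ω) = fun j => X (σ j) ω := funext hσ
      rw [hY]
      exact perm_sum σ (fun j => X j ω)
    rw [step1, step2, step3, step4]
  rw [MeasureTheory.integral_congr_ae (Filter.Eventually.of_forall hpt)]
  have hintS : ∀ S ∈ P,
      Integrable (fun ω => if h : S.Nonempty then S.sup' h (fun j => X j ω) else 0) μ := by
    intro S hS
    have h := hneS S hS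
    simp only [dif_pos h]
    exact integrable_sup' μ S h X hint
  have hval : ∀ S ∈ P,
      (∫ ω, (if h : S.Nonempty then S.sup' h (fun j => X j ω) else 0) ∂μ)
      = ∫ ω, Finset.univ.sup' hne' (fun i : Fin n => X (Fin.castLE hnB i) ω) ∂μ := by
    intro S hS
    have hne := hneS S hS
    have hcard : S.card = n := (Finset.mem_powersetCard.mp hS).2
    simp only [dif_pos hne]
    set e := S.orderIsoOfFin hcard with he
    set f : Fin n → Fin B := fun k => (e k : Fin B) with hf
    have hfinj : Function.Injective f := fun a b hab =>
      e.injective (Subtype.coe_injective hab)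
    have himg : Finset.univ.image f = S := by
      apply Finset.eq_of_subset_of_card_le
      · intro x hx
        obtain ⟨k, -, rfl⟩ := Finset.mem_image.mp hx
        exact (e k).2
      · rw [Finset.card_image_of_injective _ hfinj, Finset.card_univ, Fintype.card_fin, hcard]
    have hsup : ∀ ω, S.sup' hne (fun j => X j ω)
        = Finset.univ.sup' hne' (fun k => X (f k) ω) := by
      intro ω
      have h1 : S.sup' hne (fun j => X j ω)
          = (Finset.univ.image f).sup' (himg.symm ▸ hne) (fun j => X j ω) :=
        Finset.sup'_congr hne himg.symm (fun x _ => rfl)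
      rw [h1, Finset.sup'_image]
      rfl
    simp_rw [hsup]
    exact integral_sup_eq μ X hmeas hindep hident f (Fin.castLE hnB) hfinj
      (Fin.castLE_injective hnB) hne'
  rw [MeasureTheory.integral_const_mul, MeasureTheory.integral_finset_sum P hintS,
    Finset.sum_congr rfl hval, Finset.sum_const]
  have hcardP : P.card = B.choose n := by
    rw [hPdef, Finset.card_powersetCard, Finset.card_univ, Fintype.card_fin]
  rw [hcardP, nsmul_eq_mul, inv_mul_cancel_left₀ hC]
end
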